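/- Let n ≥ 5 be an odd integer. Consider the one-factorization of the complete graph on the vertex set (ℤ/nℤ) ∪ {∞} generated by the patterned starter, whose one-factors are P_γ = {{∞, γ}} ∪ {{x+γ, −x+γ} : x ∈ ℤ/nℤ, x ≠ 0} for γ ∈ ℤ/nℤ. This one-factorization is C4-free (that is, for all γ, δ ∈ ℤ/nℤ the graph with edge set P_γ ∪ P_δ contains no cycle of length 4) if and only if n is not divisible by 3. -/
import Mathlib

/-- A graph has a cycle of length 4. -/
def HasC4 {V : Type*} (G : SimpleGraph V) : Prop :=
  ∃ (v : V) (c : G.Walk v v), c.IsCycle ∧ c.length = 4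

/-- The one-factor `P_γ = {{∞, γ}} ∪ {{x+γ, -x+γ} : x ∈ ℤ/nℤ, x ≠ 0}` on
`(ℤ/nℤ) ∪ {∞}` (with `∞ = none`), of the one-factorization generated by the
patterned starter. -/
def patternedFactor (n : ℕ) (γ : ZMod n) : Set (Sym2 (Option (ZMod n))) :=
  {s(none, some γ)} ∪
    {e | ∃ x : ZMod n, x ≠ 0 ∧ e = s(some (x + γ), some (-x + γ))}

lemma two_mul_zero {n : ℕ} (hodd : Odd n) {x : ZMod n} (h : x + x = 0) : x = 0 := by
  have h2 : IsUnit (2 : ZMod n) := by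
    rw [show ((2:ZMod n)) = ((2:ℕ):ZMod n) by norm_num, ZMod.isUnit_iff_coprime]
    exact Nat.coprime_two_left.mpr hodd
  exact h2.mul_left_cancel (by linear_combination h)

lemma three_dvd {n : ℕ} {x : ZMod n} (hx : x ≠ 0) (h : x + x + x = 0) : 3 ∣ n := by
  have h1 : addOrderOf x ∣ 3 := addOrderOf_dvd_of_nsmul_eq_zero (by
    rw [show (3:ℕ) • x = x + x + x by module]; exact h)
  have h2 : addOrderOf x ∣ n := addOrderOf_dvd_of_nsmul_eq_zero (by
    rw [nsmul_eq_mul, ZMod.natCast_self, zero_mul])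
  have h3 : addOrderOf x ≠ 1 := fun he => hx (AddMonoid.addOrderOf_eq_one_iff.mp he)
  rcases (Nat.prime_three).eq_one_or_self_of_dvd _ h1 with h | h
  · exact absurd h h3
  · rwa [h] at h2

lemma mem_pf_cases {n : ℕ} {a b : Option (ZMod n)} {γ : ZMod n}
    (h : s(a, b) ∈ patternedFactor n γ) :
    ((a = none ∧ b = some γ) ∨ (a = some γ ∧ b = none)) ∨
      ∃ p q : ZMod n, a = some p ∧ b = some q ∧ p + q = γ + γ := by
  rcases h with h | ⟨x, hx, hxe⟩
  · rw [Set.mem_singleton_iff, Sym2.eq_iff] at h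
    rcases h with ⟨h1, h2⟩ | ⟨h1, h2⟩
    · exact Or.inl (Or.inl ⟨h1, h2⟩)
    · exact Or.inl (Or.inr ⟨h1, h2⟩)
  · rw [Sym2.eq_iff] at hxe
    rcases hxe with ⟨h1, h2⟩ | ⟨h1, h2⟩
    · exact Or.inr ⟨_, _, h1, h2, by ring⟩
    · exact Or.inr ⟨_, _, h1, h2, by ring⟩

lemma sum_edge {n : ℕ} {p q γ δ : ZMod n}
    (h : s(some p, some q) ∈ patternedFactor n γ ∪ patternedFactor n δ) :
    p + q = γ + γ ∨ p + q = δ + δ := by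
  rcases h with h | h <;> rcases mem_pf_cases h with (⟨h1, _⟩ | ⟨_, h2⟩) | ⟨p', q', h1, h2, h3⟩ <;>
    simp_all

lemma inf_edge {n : ℕ} {p γ δ : ZMod n}
    (h : s(none, some p) ∈ patternedFactor n γ ∪ patternedFactor n δ) :
    p = γ ∨ p = δ := by
  rcases h with h | h <;> rcases mem_pf_cases h with (⟨h1, h2⟩ | ⟨h1, _⟩) | ⟨p', q', h1, h2, h3⟩ <;>
    simp_all

lemma alt_c4 {n : ℕ} (hodd : Odd n) {γ δ v a b d : ZMod n} (hvb : v ≠ b)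
    (h1 : v + a = γ + γ) (h2 : a + b = δ + δ)
    (h3 : b + d = γ + γ) (h4 : d + v = δ + δ) : False := by
  obtain rfl : γ = δ := by
    have h0 := two_mul_zero hodd (two_mul_zero hodd
      (x := (γ - δ) + (γ - δ)) (by linear_combination h2 - h1 + h4 - h3))
    linear_combination h0
  exact hvb (by linear_combination h1 - h2)

/-- The heart of the "no C4" direction: a 4-cycle avoiding `∞`. -/
lemma no_finite_c4 {n : ℕ} (hodd : Odd n) {γ δ v a b d : ZMod n}
    (hvb : v ≠ b) (had : a ≠ d)
    (h1 : v + a = γ + γ ∨ v + a = δ + δ)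
    (h2 : a + b = γ + γ ∨ a + b = δ + δ)
    (h3 : b + d = γ + γ ∨ b + d = δ + δ)
    (h4 : d + v = γ + γ ∨ d + v = δ + δ) : False := by
  rcases h1 with h1 | h1 <;> rcases h2 with h2 | h2 <;> rcases h3 with h3 | h3 <;>
    rcases h4 with h4 | h4 <;>
    first
      | exact hvb (by linear_combination h1 - h2)
      | exact had (by linear_combination h2 - h3)
      | exact hvb (by linear_combination h4 - h3)
      | exact had (by linear_combination h1 - h4)
      | exact alt_c4 hodd hvb h1 h2 h3 h4

/-- The heart: a 4-cycle through `∞` gives `3 ∣ n`. -/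
lemma inf_c4 {n : ℕ} {γ δ A B C : ZMod n}
    (hAB : A ≠ B) (hBC : B ≠ C) (hAC : A ≠ C)
    (h1 : A = γ ∨ A = δ)
    (h4 : C = γ ∨ C = δ)
    (h2 : A + B = γ + γ ∨ A + B = δ + δ)
    (h3 : B + C = γ + γ ∨ B + C = δ + δ) : 3 ∣ n := by
  have key : ∀ α β : ZMod n, A = α → C = β →
      (A + B = α + α ∨ A + B = β + β) → (B + C = α + α ∨ B + C = β + β) → 3 ∣ n := by
    intro α β hA hC hh2 hh3
    subst hA; subst hC
    rcases hh2 with hh2 | hh2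
    · exact absurd (by linear_combination -hh2) hAB
    rcases hh3 with hh3 | hh3
    · refine three_dvd (x := A - C) (fun hc => hAC (by linear_combination hc)) ?_
      linear_combination hh2 - hh3
    · exact absurd (by linear_combination hh3) hBC
  rcases h1 with h1 | h1 <;> rcases h4 with h4 | h4
  · exact absurd (h1.trans h4.symm) hAC
  · exact key γ δ h1 h4 h2 h3
  · exact key δ γ h1 h4 h2.symm h3.symm
  · exact absurd (h1.trans h4.symm) hAC

open SimpleGraph in
lemma walk_len4 {V : Type*} {G : SimpleGraph V} {v : V} (c : G.Walk v v)
    (hc : c.IsCycle) (hl : c.length = 4) :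
    ∃ a b d : V, G.Adj v a ∧ G.Adj a b ∧ G.Adj b d ∧ G.Adj d v ∧
      v ≠ a ∧ v ≠ b ∧ v ≠ d ∧ a ≠ b ∧ a ≠ d ∧ b ≠ d := by
  cases c with
  | nil => simp at hl
  | cons h1 p =>
    cases p with
    | nil => simp at hl
    | cons h2 p =>
      cases p with
      | nil => simp at hl
      | cons h3 p =>
        cases p with
        | nil => simp at hl
        | cons h4 p =>
          cases p with
          | cons h5 p => simp [SimpleGraph.Walk.length_cons] at hl
          | nil =>
            have hnd := hc.support_nodup
            simp [SimpleGraph.Walk.support_cons, List.nodup_cons] at hnd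
            obtain ⟨⟨n1, n2, n3⟩, ⟨n4, n5⟩, n6⟩ := hnd
            exact ⟨_, _, _, h1, h2, h3, h4, G.ne_of_adj h1,
              fun h => n5 h.symm, fun h => n6 h.symm, n1, n2, n4⟩

open SimpleGraph in
lemma c4_exists {n : ℕ} {δ : ZMod n} (hδ0 : δ ≠ 0) (h2δ0 : δ + δ ≠ 0)
    (h3δ : δ + δ + δ = 0) :
    HasC4 (SimpleGraph.fromEdgeSet (patternedFactor n 0 ∪ patternedFactor n δ)) := by
  set G := SimpleGraph.fromEdgeSet (patternedFactor n 0 ∪ patternedFactor n δ) with hG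
  have h2δδ : δ + δ ≠ δ := fun h => hδ0 (by linear_combination h)
  have hA1 : G.Adj none (some 0) := by
    rw [hG, SimpleGraph.fromEdgeSet_adj]
    exact ⟨Or.inl (Or.inl rfl), by simp⟩
  have hA2 : G.Adj (some 0) (some (δ + δ)) := by
    rw [hG, SimpleGraph.fromEdgeSet_adj]
    refine ⟨Or.inr (Or.inr ⟨-δ, neg_ne_zero.mpr hδ0, ?_⟩),
      by simp only [Ne, Option.some.injEq]; exact fun h => h2δ0 h.symm⟩
    rw [Sym2.eq_iff]
    left
    constructor <;> · congr 1; ring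
  have hA3 : G.Adj (some (δ + δ)) (some δ) := by
    rw [hG, SimpleGraph.fromEdgeSet_adj]
    refine ⟨Or.inl (Or.inr ⟨δ + δ, h2δ0, ?_⟩),
      by simp only [Ne, Option.some.injEq]; exact h2δδ⟩
    rw [Sym2.eq_iff]
    left
    refine ⟨?_, ?_⟩
    · congr 1
      ring
    · congr 1
      linear_combination h3δ
  have hA4 : G.Adj (some δ) none := by
    rw [hG, SimpleGraph.fromEdgeSet_adj, Sym2.eq_swap]
    exact ⟨Or.inr (Or.inl rfl), by simp⟩
  refine ⟨none, .cons hA1 (.cons hA2 (.cons hA3 (.cons hA4 .nil))), ?_, by simp⟩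
  rw [SimpleGraph.Walk.isCycle_def]
  refine ⟨?_, by simp, ?_⟩
  · rw [SimpleGraph.Walk.isTrail_def]
    simp only [SimpleGraph.Walk.edges_cons, SimpleGraph.Walk.edges_nil, List.nodup_cons,
      List.mem_cons, List.not_mem_nil, or_false, List.mem_singleton, List.nodup_nil, and_true,
      Sym2.eq_iff, Option.some.injEq, not_or]
    have e1 : ¬(0:ZMod n) = δ + δ := fun h => h2δ0 h.symm
    have e2 : ¬(0:ZMod n) = δ := fun h => hδ0 h.symm
    simp [e1, e2, hδ0]
  · simp only [SimpleGraph.Walk.support_cons, SimpleGraph.Walk.support_nil, List.tail_cons,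
      List.nodup_cons, List.mem_cons, List.not_mem_nil, or_false, List.mem_singleton,
      List.nodup_nil, and_true, Option.some.injEq, not_or]
    have e1 : ¬(0:ZMod n) = δ + δ := fun h => h2δ0 h.symm
    have e2 : ¬(0:ZMod n) = δ := fun h => hδ0 h.symm
    simp [e1, e2, hδ0]

lemma some_ne {α : Type*} {a b : α} (h : (some a : Option α) ≠ some b) : a ≠ b :=
  fun h' => h (congrArg _ h')

/-- For odd `n ≥ 5`, the one-factorization of `K_{n+1}` generated by the patterned
starter is C4-free if and only if `n` is not divisible by 3. -/
theorem patterned_starter_C4_free_iff (n : ℕ) (hn : 5 ≤ n) (hodd : Odd n) :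
    (∀ γ δ : ZMod n,
      ¬ HasC4 (SimpleGraph.fromEdgeSet (patternedFactor n γ ∪ patternedFactor n δ)))
      ↔ ¬ (3 ∣ n) := by
  haveI : NeZero n := ⟨by omega⟩
  constructor
  · -- C4-freeness implies 3 ∤ n
    intro hall hdvd
    set δ : ZMod n := ((n / 3 : ℕ) : ZMod n) with hδdef
    have hδ0 : δ ≠ 0 := by
      rw [hδdef, Ne, ZMod.natCast_eq_zero_iff]
      intro hdd
      have := Nat.le_of_dvd (by omega) hdd
      omega
    have h3δ : δ + δ + δ = 0 := by
      rw [hδdef,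
        show ((n/3 : ℕ) : ZMod n) + ((n/3 : ℕ) : ZMod n) + ((n/3 : ℕ) : ZMod n)
          = ((n/3 + n/3 + n/3 : ℕ) : ZMod n) by push_cast; ring,
        show n/3 + n/3 + n/3 = n by omega, ZMod.natCast_self]
    have h2δ0 : δ + δ ≠ 0 := fun h => hδ0 (by linear_combination h3δ - h)
    exact hall 0 δ (c4_exists hδ0 h2δ0 h3δ)
  · -- 3 ∤ n implies C4-freeness
    rintro hdvd γ δ ⟨v, c, hcyc, hlen⟩
    obtain ⟨a, b, d, hA1, hA2, hA3, hA4, hva, hvb, hvd, hab, had, hbd⟩ :=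
      walk_len4 c hcyc hlen
    rw [SimpleGraph.fromEdgeSet_adj] at hA1 hA2 hA3 hA4
    obtain ⟨e1, -⟩ := hA1
    obtain ⟨e2, -⟩ := hA2
    obtain ⟨e3, -⟩ := hA3
    obtain ⟨e4, -⟩ := hA4
    rcases v with - | v' <;> rcases a with - | a' <;> rcases b with - | b' <;>
      rcases d with - | d'
    · exact hva rfl
    · exact hva rfl
    · exact hva rfl
    · exact hva rfl
    · exact hvb rfl
    · exact hvb rfl
    · exact hvd rfl
    · -- v = none
      rw [Sym2.eq_swap] at e4
      exact hdvd (inf_c4 (some_ne hab) (some_ne hbd) (fun h => had (congrArg _ h))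
        (inf_edge e1) (inf_edge e4) (sum_edge e2) (sum_edge e3))
    · exact hab rfl
    · exact hab rfl
    · exact had rfl
    · -- a = none
      rw [Sym2.eq_swap] at e1
      exact hdvd (inf_c4 (some_ne hbd) (fun h => hvd (congrArg some h.symm))
        (fun h => hvb (congrArg some h.symm))
        (inf_edge e2) (inf_edge e1) (sum_edge e3) (sum_edge e4))
    · exact hbd rfl
    · -- b = none
      rw [Sym2.eq_swap] at e2
      exact hdvd (inf_c4 (fun h => hvd (congrArg some h.symm)) (some_ne hva)
        (fun h => had (congrArg some h.symm))
        (inf_edge e3) (inf_edge e2) (sum_edge e4) (sum_edge e1))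
    · -- d = none
      rw [Sym2.eq_swap] at e3
      exact hdvd (inf_c4 (some_ne hva) (some_ne hab) (fun h => hvb (congrArg some h))
        (inf_edge e4) (inf_edge e3) (sum_edge e1) (sum_edge e2))
    · -- all finite
      exact no_finite_c4 hodd (some_ne hvb) (some_ne had)
        (sum_edge e1) (sum_edge e2) (sum_edge e3) (sum_edge e4)
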